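/- For every generalized state divergence 𝔻 and every tripartite quantum channel N_{A'B'C'→ABC}, the generalized entropy exhibits strong subadditivity: 𝐒[A|BC]_N ≤ 𝐒[A|B]_{tr_C∘N}, where tr_C∘N_{A'B'C'→ABC} is the reduced channel from A'B'C' to AB, 𝐒[A|BC]_N := −inf_M 𝔻[N ‖ R_{A'→A}⊗M_{B'C'→BC}] with the infimum over all quantum channels M_{B'C'→BC}, and 𝐒[A|B]_{tr_C∘N} := −inf_P 𝔻[tr_C∘N ‖ R_{A'→A}⊗P_{B'C'→B}] with the infimum over all quantum channels P_{B'C'→B}. -/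

import Mathlib

namespace QIT

open Matrix
open scoped Kronecker ComplexOrder

noncomputable section

/-- Square matrices over `ℂ` indexed by `ι`, the operators on the Hilbert space `ℂ^ι`. -/
abbrev Mat (ι : Type) : Type := Matrix ι ι ℂ

/-- Linear maps between matrix spaces. -/
abbrev MatMap (ι κ : Type) : Type := Mat ι →ₗ[ℂ] Mat κ

/-- The tensor product `L₁ ⊗ L₂` of two linear maps on matrix spaces, defined entrywise
via matrix units. -/
def tensorMap {ι₁ κ₁ ι₂ κ₂ : Type} [Fintype ι₁] [DecidableEq ι₁] [Fintype ι₂] [DecidableEq ι₂]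
    (L₁ : MatMap ι₁ κ₁) (L₂ : MatMap ι₂ κ₂) : MatMap (ι₁ × ι₂) (κ₁ × κ₂) where
  toFun X := Matrix.of fun p q => ∑ k₁, ∑ l₁, ∑ k₂, ∑ l₂,
      X (k₁, k₂) (l₁, l₂) * L₁ (Matrix.single k₁ l₁ 1) p.1 q.1
        * L₂ (Matrix.single k₂ l₂ 1) p.2 q.2
  map_add' X Y := by
    ext p q
    simp [Matrix.add_apply, add_mul, Finset.sum_add_distrib]
  map_smul' c X := by
    ext p q
    simp [Matrix.smul_apply, smul_eq_mul, Finset.mul_sum, mul_assoc]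

/-- A quantum state: positive semidefinite with unit trace. -/
def IsState {ι : Type} [Fintype ι] (ρ : Mat ι) : Prop :=
  ρ.PosSemidef ∧ ρ.trace = 1

/-- Trace preserving linear map. -/
def TracePreserving {ι κ : Type} [Fintype ι] [Fintype κ] (L : MatMap ι κ) : Prop :=
  ∀ X, (L X).trace = X.trace

/-- Complete positivity: `id_R ⊗ L` preserves positive semidefiniteness for every
finite-dimensional reference system `R`. -/
def IsCP {ι κ : Type} [Fintype ι] [DecidableEq ι] [Fintype κ] (L : MatMap ι κ) : Prop :=
  ∀ (r : ℕ) (X : Mat (Fin r × ι)), X.PosSemidef →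
    (tensorMap (LinearMap.id : MatMap (Fin r) (Fin r)) L X).PosSemidef

/-- A quantum channel: completely positive and trace preserving. -/
def IsChannel {ι κ : Type} [Fintype ι] [DecidableEq ι] [Fintype κ] (L : MatMap ι κ) : Prop :=
  IsCP L ∧ TracePreserving L

/-- The completely mixing (depolarizing) map `X ↦ tr(X) · 1`. -/
def Rmap (ι κ : Type) [Fintype ι] [DecidableEq κ] : MatMap ι κ where
  toFun X := X.trace • (1 : Mat κ)
  map_add' X Y := by simp [Matrix.trace_add, add_smul]
  map_smul' c X := by simp [Matrix.trace_smul, SemigroupAction.mul_smul]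

/-- Partial trace over the second tensor factor. -/
def ptraceRightMap (ι κ : Type) [Fintype κ] : MatMap (ι × κ) ι where
  toFun X := Matrix.of fun p q => ∑ k, X (p, k) (q, k)
  map_add' X Y := by
    ext p q
    simp [Matrix.add_apply, Finset.sum_add_distrib]
  map_smul' c X := by
    ext p q
    simp [Matrix.smul_apply, smul_eq_mul, Finset.mul_sum]

/-- A generalized state divergence: a function of a pair (state, positive semidefinite
operator) on a common finite-dimensional system, satisfying the data-processing inequality
under all quantum channels. -/
structure StateDivergence : Type 1 where
  D : ∀ {ι : Type} [Fintype ι] [DecidableEq ι], Mat ι → Mat ι → EReal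
  dpi : ∀ {ι κ : Type} [Fintype ι] [DecidableEq ι] [Fintype κ] [DecidableEq κ]
      (L : MatMap ι κ), IsChannel L → ∀ ρ σ : Mat ι, IsState ρ → σ.PosSemidef →
      D (L ρ) (L σ) ≤ D ρ σ

/-- The generalized channel function `𝔻[N‖M]`: supremum over all finite-dimensional
reference systems `R = Fin r` and all input states of the state divergence of the outputs. -/
def chDiv (𝔻 : StateDivergence) {ι κ : Type} [Fintype ι] [DecidableEq ι]
    [Fintype κ] [DecidableEq κ] (N M : MatMap ι κ) : EReal :=
  ⨆ (r : ℕ) (ρ : {ρ : Mat (Fin r × ι) // IsState ρ}),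
    𝔻.D (tensorMap (LinearMap.id : MatMap (Fin r) (Fin r)) N ρ.1)
        (tensorMap (LinearMap.id : MatMap (Fin r) (Fin r)) M ρ.1)

/-- The generalized conditional entropy of a bipartite channel,
`𝐒[A|B]_N = −inf_M 𝔻[N ‖ R_{A'→A} ⊗ M_{B'→B}]`. -/
def condEnt (𝔻 : StateDivergence) {α' β' α β : Type}
    [Fintype α'] [DecidableEq α'] [Fintype β'] [DecidableEq β']
    [Fintype α] [DecidableEq α] [Fintype β] [DecidableEq β]
    (N : MatMap (α' × β') (α × β)) : EReal :=
  - ⨅ (M : {M : MatMap β' β // IsChannel M}),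
      chDiv 𝔻 N (tensorMap (Rmap α' α) M.1)


/-! ### The von Neumann / spectral layer -/

section Aux

variable {ι κ μ ν R S : Type}

lemma tensorMap_apply [Fintype ι] [DecidableEq ι] [Fintype κ] [DecidableEq κ]
    (L₁ : MatMap ι μ) (L₂ : MatMap κ S) (X : Mat (ι × κ)) (p q : μ × S) :
    tensorMap L₁ L₂ X p q = ∑ k₁, ∑ l₁, ∑ k₂, ∑ l₂,
      X (k₁, k₂) (l₁, l₂) * L₁ (Matrix.single k₁ l₁ 1) p.1 q.1
        * L₂ (Matrix.single k₂ l₂ 1) p.2 q.2 := rfl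

lemma stdBasisMatrix_smul [DecidableEq ι] [DecidableEq κ] (i : ι) (j : κ) (c : ℂ) :
    Matrix.single i j c = c • Matrix.single i j (1 : ℂ) := by
  ext a b
  simp only [Matrix.single, Matrix.of_apply, Matrix.smul_apply, smul_eq_mul]
  split_ifs <;> simp

lemma apply_eq_sum [Fintype ι] [DecidableEq ι] (F : MatMap ι κ) (A : Mat ι) (p q : κ) :
    F A p q = ∑ m, ∑ n, A m n * F (Matrix.single m n 1) p q := by
  have h : ∀ (m : ι) (n : ι), Matrix.single m n (A m n)
      = A m n • Matrix.single m n (1 : ℂ) := fun m n => stdBasisMatrix_smul m n _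
  conv_lhs => rw [Matrix.matrix_eq_sum_single A]
  rw [map_sum]
  simp only [map_sum, h, _root_.map_smul]
  simp [Matrix.sum_apply, smul_eq_mul]

end Aux
section Aux2

variable {ι κ μ ν R S ι₁ κ₁ μ₁ ι₂ κ₂ μ₂ : Type}

lemma tensorMap_kron [Fintype ι] [DecidableEq ι] [Fintype κ] [DecidableEq κ]
    (L₁ : MatMap ι μ) (L₂ : MatMap κ S) (A : Mat ι) (B : Mat κ) :
    tensorMap L₁ L₂ (A ⊗ₖ B) = (L₁ A) ⊗ₖ (L₂ B) := by
  ext p q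
  rw [Matrix.kroneckerMap_apply, tensorMap_apply, apply_eq_sum L₁ A, apply_eq_sum L₂ B]
  simp only [Finset.sum_mul]
  simp only [Finset.mul_sum]
  refine Finset.sum_congr rfl fun k₁ _ => Finset.sum_congr rfl fun l₁ _ =>
    Finset.sum_congr rfl fun k₂ _ => Finset.sum_congr rfl fun l₂ _ => ?_
  rw [Matrix.kroneckerMap_apply]
  ring

lemma stdBasisMatrix_kron [DecidableEq ι] [DecidableEq κ] (k₁ l₁ : ι) (k₂ l₂ : κ) :
    Matrix.single (k₁, k₂) (l₁, l₂) (1 : ℂ)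
      = Matrix.single k₁ l₁ (1 : ℂ) ⊗ₖ Matrix.single k₂ l₂ (1 : ℂ) := by
  ext ⟨a₁, a₂⟩ ⟨b₁, b₂⟩
  simp only [Matrix.single, Matrix.of_apply, Matrix.kroneckerMap_apply, Prod.mk.injEq]
  by_cases h1 : k₁ = a₁ <;> by_cases h2 : l₁ = b₁ <;> by_cases h3 : k₂ = a₂ <;>
    by_cases h4 : l₂ = b₂ <;> simp [h1, h2, h3, h4]

lemma tensorMap_comp [Fintype ι₁] [DecidableEq ι₁] [Fintype κ₁] [DecidableEq κ₁]
    [Fintype ι₂] [DecidableEq ι₂] [Fintype κ₂] [DecidableEq κ₂]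
    (F : MatMap κ₁ μ₁) (G : MatMap ι₁ κ₁) (f : MatMap κ₂ μ₂) (g : MatMap ι₂ κ₂) :
    tensorMap (F ∘ₗ G) (f ∘ₗ g) = (tensorMap F f) ∘ₗ (tensorMap G g) := by
  apply LinearMap.ext; intro X
  have h : ∀ (k l : ι₁ × ι₂), Matrix.single k l (X k l)
      = X k l • (Matrix.single k.1 l.1 (1:ℂ) ⊗ₖ Matrix.single k.2 l.2 (1:ℂ)) := by
    intro k l
    rw [stdBasisMatrix_smul, ← stdBasisMatrix_kron]
  conv_lhs => rw [Matrix.matrix_eq_sum_single X]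
  conv_rhs => rw [LinearMap.comp_apply, Matrix.matrix_eq_sum_single X]
  simp only [map_sum, h, _root_.map_smul, tensorMap_kron, LinearMap.comp_apply]

end Aux2
section Aux3

variable {ι κ μ R S : Type}

lemma tensorMap_id_apply [Fintype R] [DecidableEq R] [Fintype ι] [DecidableEq ι]
    (L : MatMap ι κ) (X : Mat (R × ι)) (p q : R × κ) :
    tensorMap (LinearMap.id : MatMap R R) L X p q
      = ∑ k, ∑ l, X (p.1, k) (q.1, l) * L (Matrix.single k l 1) p.2 q.2 := by
  rw [tensorMap_apply]
  simp only [LinearMap.id_coe, id_eq, Matrix.single, Matrix.of_apply, ite_and,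
    mul_ite, ite_mul, mul_one, mul_zero, zero_mul, one_mul,
    Finset.sum_ite_irrel, Finset.sum_const_zero, Finset.sum_ite_eq]
  simp

lemma trace_stdBasisMatrix [Fintype ι] [DecidableEq ι] (k l : ι) :
    (Matrix.single k l (1 : ℂ)).trace = if k = l then 1 else 0 := by
  simp only [Matrix.trace, Matrix.diag, Matrix.single, Matrix.of_apply]
  split_ifs with h
  · subst h; simp
  · apply Finset.sum_eq_zero; intro a _
    simp only [ite_eq_right_iff, and_imp]
    rintro rfl rfl; exact absurd rfl h

lemma tp_tensor_id [Fintype R] [DecidableEq R] [Fintype ι] [DecidableEq ι] [Fintype κ]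
    {L : MatMap ι κ} (hL : TracePreserving L) :
    TracePreserving (tensorMap (LinearMap.id : MatMap R R) L) := by
  intro X
  simp only [Matrix.trace]
  rw [Fintype.sum_prod_type]
  simp only [Matrix.diag_apply, tensorMap_id_apply]
  have : ∀ p₁ : R, ∑ p₂ : κ, ∑ k, ∑ l, X (p₁, k) (p₁, l)
        * L (Matrix.single k l 1) p₂ p₂
      = ∑ k, X (p₁, k) (p₁, k) := by
    intro p₁
    rw [Finset.sum_comm]
    refine Finset.sum_congr rfl fun k _ => ?_
    rw [Finset.sum_comm]
    have : ∀ l : ι, ∑ p₂ : κ, X (p₁, k) (p₁, l) * L (Matrix.single k l 1) p₂ p₂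
        = X (p₁, k) (p₁, l) * (if k = l then 1 else 0) := by
      intro l
      rw [← Finset.mul_sum]
      congr 1
      have h2 := hL (Matrix.single k l 1)
      rw [trace_stdBasisMatrix] at h2
      simpa only [Matrix.trace, Matrix.diag] using h2
    simp only [this, mul_ite, mul_one, mul_zero, Finset.sum_ite_eq, Finset.mem_univ, if_true]
  simp only [this]
  rw [Fintype.sum_prod_type]

lemma conj_sum_psd {γ : Type} [Fintype ι] [Fintype κ] [Fintype γ]
    (P : γ → Matrix ι κ ℂ) {X : Mat κ} (hX : X.PosSemidef) :
    (∑ m, P m * X * (P m)ᴴ).PosSemidef := by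
  classical
  refine Finset.sum_induction _ _ (fun a b ha hb => ha.add hb) Matrix.PosSemidef.zero
    (fun m _ => hX.mul_mul_conjTranspose_same (P m))

lemma fiber_psd {γ : Type} [Fintype ι] [DecidableEq ι] [Fintype κ] [DecidableEq κ] [Fintype γ]
    (e : ι → γ → κ) {X : Mat κ} (hX : X.PosSemidef)
    (Y : Mat ι) (hY : ∀ p q, Y p q = ∑ m, X (e p m) (e q m)) : Y.PosSemidef := by
  have hP : Y = ∑ m, (Matrix.of fun p k => if e p m = k then (1:ℂ) else 0) * X
      * (Matrix.of fun p k => if e p m = k then (1:ℂ) else 0)ᴴ := by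
    ext p q
    rw [hY]
    rw [Matrix.sum_apply]
    refine Finset.sum_congr rfl fun m _ => ?_
    rw [Matrix.mul_apply]
    have h1 : ∀ k', ((Matrix.of fun p k => if e p m = k then (1:ℂ) else 0) * X) p k'
        = X (e p m) k' := by
      intro k'
      rw [Matrix.mul_apply]
      simp [ite_mul, Finset.sum_ite_eq]
    simp only [h1, Matrix.conjTranspose_apply, Matrix.of_apply]
    simp [mul_ite, Finset.sum_ite_eq]
  rw [hP]
  exact conj_sum_psd _ hX

end Aux3
section Aux4

variable {ι κ μ R S : Type}

lemma stdBasisMatrix_apply' [DecidableEq ι] [DecidableEq κ] (k a : ι) (l b : κ) :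
    Matrix.single k l (1 : ℂ) a b
      = if l = b then (if k = a then (1:ℂ) else 0) else 0 := by
  simp only [Matrix.single, Matrix.of_apply]
  split_ifs with h1 h2 h3 <;> simp_all [h1]

/-- lifting a "fiber form" through `tensorMap id`. -/
lemma fiber_lift {γ : Type} [Fintype γ] [Fintype ι] [DecidableEq ι] [Fintype R] [DecidableEq R]
    [DecidableEq κ]
    (L : MatMap ι κ) (e : κ → γ → ι)
    (hL : ∀ (X : Mat ι) p q, L X p q = ∑ m, X (e p m) (e q m)) :
    ∀ (X : Mat (R × ι)) (p q : R × κ),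
      tensorMap (LinearMap.id : MatMap R R) L X p q
        = ∑ m, X (p.1, e p.2 m) (q.1, e q.2 m) := by
  intro X p q
  rw [tensorMap_id_apply]
  simp only [hL, Finset.mul_sum]
  calc (∑ k, ∑ l, ∑ m, X (p.1, k) (q.1, l)
          * Matrix.single k l (1:ℂ) (e p.2 m) (e q.2 m))
      = ∑ k, ∑ m, ∑ l, X (p.1, k) (q.1, l)
          * Matrix.single k l (1:ℂ) (e p.2 m) (e q.2 m) :=
        Finset.sum_congr rfl fun k _ => Finset.sum_comm
    _ = ∑ m, ∑ k, ∑ l, X (p.1, k) (q.1, l)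
          * Matrix.single k l (1:ℂ) (e p.2 m) (e q.2 m) := Finset.sum_comm
    _ = ∑ m, X (p.1, e p.2 m) (q.1, e q.2 m) := by
        refine Finset.sum_congr rfl fun m _ => ?_
        simp only [stdBasisMatrix_apply', mul_ite, mul_one, mul_zero,
          Finset.sum_ite_eq', Finset.mem_univ, if_true]

lemma isCP_of_fiber {γ : Type} [Fintype γ] [Fintype ι] [DecidableEq ι] [Fintype κ] [DecidableEq κ]
    (L : MatMap ι κ) (e : κ → γ → ι)
    (hL : ∀ (X : Mat ι) p q, L X p q = ∑ m, X (e p m) (e q m)) : IsCP L := by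
  intro r X hX
  exact fiber_psd (fun p m => (p.1, e p.2 m)) hX _ (fun p q => fiber_lift L e hL X p q)

lemma ptrace_fiber [Fintype ι] [Fintype κ] :
    ∀ (X : Mat (ι × κ)) (p q : ι), ptraceRightMap ι κ X p q = ∑ m, X (p, m) (q, m) :=
  fun _ _ _ => rfl

lemma tp_ptrace [Fintype ι] [Fintype κ] : TracePreserving (ptraceRightMap ι κ) := by
  intro X
  simp only [Matrix.trace, Matrix.diag]
  rw [Fintype.sum_prod_type]
  rfl

end Aux4
section Aux5

variable {ι κ μ R S : Type}

lemma sum_ite_push {β : Type} [Fintype β] (c : Prop) [Decidable c] (f : β → ℂ) :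
    ∑ x : β, (if c then f x else 0) = if c then ∑ x, f x else 0 := by
  split_ifs <;> simp

lemma tensorMap_id_id_apply [Fintype R] [DecidableEq R] [Fintype S] [DecidableEq S]
    [Fintype ι] [DecidableEq ι] [DecidableEq κ]
    (L : MatMap ι κ) (X : Mat (R × (S × ι))) (p q : R × (S × κ)) :
    tensorMap (LinearMap.id : MatMap R R) (tensorMap (LinearMap.id : MatMap S S) L) X p q
      = ∑ k, ∑ l, X (p.1, (p.2.1, k)) (q.1, (q.2.1, l))
          * L (Matrix.single k l 1) p.2.2 q.2.2 := by
  rw [tensorMap_id_apply]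
  simp only [Fintype.sum_prod_type, stdBasisMatrix_kron, tensorMap_kron,
    Matrix.kroneckerMap_apply, LinearMap.id_coe, id_eq, stdBasisMatrix_apply',
    mul_ite, ite_mul, mul_zero, zero_mul, mul_one, one_mul,
    sum_ite_push, Finset.sum_ite_eq', Finset.sum_ite_eq, Finset.sum_const_zero,
    Finset.mem_univ, if_true]


lemma isCP_apply_psd [Fintype ι] [DecidableEq ι] [Fintype κ] {L : MatMap ι κ} (hL : IsCP L)
    [Fintype R] [DecidableEq R] {X : Mat (R × ι)} (hX : X.PosSemidef) :
    (tensorMap (LinearMap.id : MatMap R R) L X).PosSemidef := by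
  classical
  set n := Fintype.card R with hn
  set h : R ≃ Fin n := Fintype.equivFin R with hh
  have hX' : (X.submatrix (Prod.map h.symm id) (Prod.map h.symm id)).PosSemidef :=
    hX.submatrix _
  have key : tensorMap (LinearMap.id : MatMap R R) L X
      = (tensorMap (LinearMap.id : MatMap (Fin n) (Fin n)) L
          (X.submatrix (Prod.map h.symm id) (Prod.map h.symm id))).submatrix
          (Prod.map h id) (Prod.map h id) := by
    ext p q
    rw [Matrix.submatrix_apply, tensorMap_id_apply, tensorMap_id_apply]
    simp [Matrix.submatrix_apply, Prod.map]
  rw [key]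
  exact (hL n _ hX').submatrix _

lemma nested_psd [Fintype ι] [DecidableEq ι] [Fintype κ] [DecidableEq κ]
    {L : MatMap ι κ} (hL : IsCP L)
    [Fintype R] [DecidableEq R] [Fintype S] [DecidableEq S]
    {X : Mat (R × (S × ι))} (hX : X.PosSemidef) :
    (tensorMap (LinearMap.id : MatMap R R)
      (tensorMap (LinearMap.id : MatMap S S) L) X).PosSemidef := by
  have key : tensorMap (LinearMap.id : MatMap R R)
        (tensorMap (LinearMap.id : MatMap S S) L) X
      = ((tensorMap (LinearMap.id : MatMap (R × S) (R × S)) L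
          (X.submatrix (fun x : (R × S) × ι => (x.1.1, (x.1.2, x.2)))
            (fun x : (R × S) × ι => (x.1.1, (x.1.2, x.2))))).submatrix
          (fun x : R × (S × κ) => ((x.1, x.2.1), x.2.2))
          (fun x : R × (S × κ) => ((x.1, x.2.1), x.2.2))) := by
    ext p q
    rw [Matrix.submatrix_apply, tensorMap_id_id_apply, tensorMap_id_apply]
    simp [Matrix.submatrix_apply]
  rw [key]
  exact (isCP_apply_psd hL (hX.submatrix _)).submatrix _

lemma Rmap_apply [Fintype ι] [DecidableEq μ] (A : Mat ι) :
    Rmap ι μ A = A.trace • (1 : Mat μ) := rfl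

lemma tensorMap_id_Rmap_id_apply [Fintype R] [DecidableEq R] [Fintype ι] [DecidableEq ι]
    [Fintype κ] [DecidableEq κ] [Fintype μ] [DecidableEq μ]
    (X : Mat (R × (ι × κ))) (p q : R × (μ × κ)) :
    tensorMap (LinearMap.id : MatMap R R)
        (tensorMap (Rmap ι μ) (LinearMap.id : MatMap κ κ)) X p q
      = (if p.2.1 = q.2.1 then (1:ℂ) else 0)
          * ∑ k, X (p.1, (k, p.2.2)) (q.1, (k, q.2.2)) := by
  rw [tensorMap_id_apply]
  simp only [Fintype.sum_prod_type, stdBasisMatrix_kron, tensorMap_kron,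
    Matrix.kroneckerMap_apply, LinearMap.id_coe, id_eq, Rmap_apply, trace_stdBasisMatrix,
    Matrix.smul_apply, Matrix.one_apply, smul_eq_mul, stdBasisMatrix_apply',
    mul_ite, ite_mul, mul_zero, zero_mul, mul_one, one_mul,
    sum_ite_push, Finset.sum_ite_eq', Finset.sum_ite_eq, Finset.sum_const_zero,
    Finset.mem_univ, if_true, Finset.mul_sum]

lemma blockdiag_psd [Fintype R] [DecidableEq R] [Fintype κ] [DecidableEq κ]
    [Fintype μ] [DecidableEq μ]
    {W : Mat (R × κ)} (hW : W.PosSemidef) (Z : Mat (R × (μ × κ)))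
    (hZ : ∀ p q, Z p q = (if p.2.1 = q.2.1 then (1:ℂ) else 0)
        * W (p.1, p.2.2) (q.1, q.2.2)) : Z.PosSemidef := by
  have key : Z = ∑ a : μ,
      (Matrix.of fun (p : R × (μ × κ)) (u : R × κ) =>
        if p.2.1 = a then (if (p.1, p.2.2) = u then (1:ℂ) else 0) else 0) * W
      * (Matrix.of fun (p : R × (μ × κ)) (u : R × κ) =>
        if p.2.1 = a then (if (p.1, p.2.2) = u then (1:ℂ) else 0) else 0)ᴴ := by
    ext p q
    rw [hZ, Matrix.sum_apply]
    have h1 : ∀ (a : μ),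
        ((Matrix.of fun (p : R × (μ × κ)) (u : R × κ) =>
          if p.2.1 = a then (if (p.1, p.2.2) = u then (1:ℂ) else 0) else 0) * W
        * (Matrix.of fun (p : R × (μ × κ)) (u : R × κ) =>
          if p.2.1 = a then (if (p.1, p.2.2) = u then (1:ℂ) else 0) else 0)ᴴ) p q
        = if p.2.1 = a then (if q.2.1 = a then W (p.1, p.2.2) (q.1, q.2.2) else 0) else 0 := by
      intro a
      rw [Matrix.mul_apply]
      have h2 : ∀ u', ((Matrix.of fun (p : R × (μ × κ)) (u : R × κ) =>
          if p.2.1 = a then (if (p.1, p.2.2) = u then (1:ℂ) else 0) else 0) * W) p u'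
          = if p.2.1 = a then W (p.1, p.2.2) u' else 0 := by
        intro u'
        rw [Matrix.mul_apply]
        simp [ite_mul, zero_mul, one_mul, sum_ite_push, Finset.sum_ite_eq]
      have hstar : ∀ (c : Prop) (inst : Decidable c), (star (if c then (1:ℂ) else 0)) = if c then 1 else 0 := by
        intro c inst; split_ifs <;> simp
      simp only [Matrix.conjTranspose_apply, h2, Matrix.of_apply, hstar,
        mul_ite, ite_mul, mul_zero, zero_mul, mul_one, one_mul,
        sum_ite_push, Finset.sum_ite_eq, Finset.sum_ite_eq', Finset.sum_const_zero,
        Finset.mem_univ, if_true]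
      simp [apply_ite (star : ℂ → ℂ), mul_ite, mul_zero, mul_one,
        sum_ite_push, Finset.sum_ite_eq, Finset.sum_ite_eq']
    simp only [h1, sum_ite_push, Finset.sum_ite_eq, Finset.sum_ite_eq', Finset.sum_const_zero,
      Finset.mem_univ, if_true]
    by_cases h : p.2.1 = q.2.1 <;> simp [h, eq_comm]
  rw [key]
  exact conj_sum_psd _ hW

end Aux5
section Aux6

variable {ι κ μ R S : Type}

lemma tensorMap_id_comp [Fintype R] [DecidableEq R] [Fintype ι] [DecidableEq ι]
    [Fintype κ] [DecidableEq κ] (f : MatMap κ μ) (g : MatMap ι κ) :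
    tensorMap (LinearMap.id : MatMap R R) (f ∘ₗ g)
      = (tensorMap (LinearMap.id : MatMap R R) f) ∘ₗ (tensorMap (LinearMap.id : MatMap R R) g) := by
  have h := tensorMap_comp (LinearMap.id : MatMap R R) (LinearMap.id : MatMap R R) f g
  rwa [LinearMap.id_comp (LinearMap.id : MatMap R R)] at h

lemma isChannel_comp [Fintype ι] [DecidableEq ι] [Fintype κ] [DecidableEq κ] [Fintype μ]
    {f : MatMap κ μ} {g : MatMap ι κ} (hf : IsChannel f) (hg : IsChannel g) :
    IsChannel (f ∘ₗ g) := by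
  constructor
  · intro r X hX
    rw [tensorMap_id_comp f g, LinearMap.comp_apply]
    exact hf.1 r _ (hg.1 r X hX)
  · intro X
    rw [LinearMap.comp_apply, hf.2, hg.2]

lemma isChannel_ptrace [Fintype ι] [DecidableEq ι] [Fintype κ] [DecidableEq κ] :
    IsChannel (ptraceRightMap ι κ) :=
  ⟨isCP_of_fiber _ (fun p m => (p, m)) (ptrace_fiber), tp_ptrace⟩

lemma isState_tensor [Fintype ι] [DecidableEq ι] [Fintype κ]
    [Fintype R] [DecidableEq R]
    {N : MatMap ι κ} (hN : IsChannel N) {ρ : Mat (R × ι)} (hρ : IsState ρ) :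
    IsState (tensorMap (LinearMap.id : MatMap R R) N ρ) :=
  ⟨isCP_apply_psd hN.1 hρ.1, by rw [tp_tensor_id hN.2 ρ, hρ.2]⟩

lemma Rmap_id_psd [Fintype R] [DecidableEq R] [Fintype ι] [DecidableEq ι]
    [Fintype κ] [DecidableEq κ] [Fintype μ] [DecidableEq μ]
    {Y : Mat (R × (ι × κ))} (hY : Y.PosSemidef) :
    (tensorMap (LinearMap.id : MatMap R R)
      (tensorMap (Rmap ι μ) (LinearMap.id : MatMap κ κ)) Y).PosSemidef := by
  have hW : (Matrix.of fun (u v : R × κ) =>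
      ∑ k, Y (u.1, (k, u.2)) (v.1, (k, v.2))).PosSemidef := by
    refine fiber_psd (fun u m => (u.1, (m, u.2))) hY _ fun p q => ?_
    rfl
  exact blockdiag_psd hW _ (fun p q => by rw [tensorMap_id_Rmap_id_apply]; rfl)

lemma sigma_psd {α' α β' β : Type}
    [Fintype α'] [DecidableEq α'] [Fintype α] [DecidableEq α]
    [Fintype β'] [DecidableEq β'] [Fintype β] [DecidableEq β]
    [Fintype R] [DecidableEq R]
    {M : MatMap β' β} (hM : IsCP M) {ρ : Mat (R × (α' × β'))} (hρ : ρ.PosSemidef) :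
    (tensorMap (LinearMap.id : MatMap R R) (tensorMap (Rmap α' α) M) ρ).PosSemidef := by
  have hdec : tensorMap (Rmap α' α) M
      = (tensorMap (Rmap α' α) (LinearMap.id : MatMap β β)) ∘ₗ
        (tensorMap (LinearMap.id : MatMap α' α') M) := by
    have h := tensorMap_comp (Rmap α' α) (LinearMap.id : MatMap α' α')
      (LinearMap.id : MatMap β β) M
    rwa [LinearMap.comp_id, LinearMap.id_comp] at h
  rw [hdec, tensorMap_id_comp, LinearMap.comp_apply]
  exact Rmap_id_psd (nested_psd hM hρ)

end Aux6
section Aux7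

lemma chDiv_mono (𝔻 : StateDivergence) {α' β' γ' α β γ : Type}
    [Fintype α'] [DecidableEq α'] [Fintype β'] [DecidableEq β'] [Fintype γ'] [DecidableEq γ']
    [Fintype α] [DecidableEq α] [Fintype β] [DecidableEq β] [Fintype γ] [DecidableEq γ]
    (N : MatMap (α' × (β' × γ')) (α × (β × γ))) (hN : IsChannel N)
    (M : MatMap (β' × γ') (β × γ)) (hM : IsChannel M) :
    chDiv 𝔻 ((tensorMap (LinearMap.id : MatMap α α) (ptraceRightMap β γ)) ∘ₗ N)
        (tensorMap (Rmap α' α) (ptraceRightMap β γ ∘ₗ M))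
      ≤ chDiv 𝔻 N (tensorMap (Rmap α' α) M) := by
  refine iSup_le fun r => iSup_le fun ρ => ?_
  set T := tensorMap (LinearMap.id : MatMap α α) (ptraceRightMap β γ) with hT
  set Lr := tensorMap (LinearMap.id : MatMap (Fin r) (Fin r)) T with hLrdef
  have h2 : tensorMap (Rmap α' α) (ptraceRightMap β γ ∘ₗ M)
      = T ∘ₗ tensorMap (Rmap α' α) M := by
    have h := tensorMap_comp (LinearMap.id : MatMap α α) (Rmap α' α) (ptraceRightMap β γ) M
    rwa [LinearMap.id_comp] at h
  have hTfiber : ∀ (X : Mat (α × (β × γ))) p q, T X p q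
      = ∑ m, X (p.1, (p.2, m)) (q.1, (q.2, m)) :=
    fiber_lift (ptraceRightMap β γ) (fun p m => (p, m)) ptrace_fiber
  have hLrfiber : ∀ (X : Mat (Fin r × (α × (β × γ)))) p q, Lr X p q
      = ∑ m, X (p.1, (p.2.1, (p.2.2, m))) (q.1, (q.2.1, (q.2.2, m))) :=
    fiber_lift T (fun p m => (p.1, (p.2, m))) hTfiber
  have hLr : IsChannel Lr :=
    ⟨isCP_of_fiber Lr _ hLrfiber, tp_tensor_id (tp_tensor_id tp_ptrace)⟩
  have hstate : IsState (tensorMap (LinearMap.id : MatMap (Fin r) (Fin r)) N ρ.1) :=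
    isState_tensor hN ρ.2
  have hpsd : (tensorMap (LinearMap.id : MatMap (Fin r) (Fin r))
      (tensorMap (Rmap α' α) M) ρ.1).PosSemidef :=
    sigma_psd hM.1 ρ.2.1
  have heq1 : tensorMap (LinearMap.id : MatMap (Fin r) (Fin r)) (T ∘ₗ N) ρ.1
      = Lr (tensorMap (LinearMap.id : MatMap (Fin r) (Fin r)) N ρ.1) := by
    rw [tensorMap_id_comp, LinearMap.comp_apply]
  have heq2 : tensorMap (LinearMap.id : MatMap (Fin r) (Fin r))
        (tensorMap (Rmap α' α) (ptraceRightMap β γ ∘ₗ M)) ρ.1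
      = Lr (tensorMap (LinearMap.id : MatMap (Fin r) (Fin r))
          (tensorMap (Rmap α' α) M) ρ.1) := by
    rw [h2, tensorMap_id_comp, LinearMap.comp_apply]
  calc 𝔻.D (tensorMap (LinearMap.id : MatMap (Fin r) (Fin r)) (T ∘ₗ N) ρ.1)
        (tensorMap (LinearMap.id : MatMap (Fin r) (Fin r))
          (tensorMap (Rmap α' α) (ptraceRightMap β γ ∘ₗ M)) ρ.1)
      = 𝔻.D (Lr (tensorMap (LinearMap.id : MatMap (Fin r) (Fin r)) N ρ.1))
          (Lr (tensorMap (LinearMap.id : MatMap (Fin r) (Fin r))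
            (tensorMap (Rmap α' α) M) ρ.1)) := by rw [heq1, heq2]
    _ ≤ 𝔻.D (tensorMap (LinearMap.id : MatMap (Fin r) (Fin r)) N ρ.1)
          (tensorMap (LinearMap.id : MatMap (Fin r) (Fin r))
            (tensorMap (Rmap α' α) M) ρ.1) := 𝔻.dpi Lr hLr _ _ hstate hpsd
    _ ≤ _ := le_iSup_of_le r (le_iSup
          (fun ρ' : {ρ' : Mat (Fin r × (α' × (β' × γ'))) // IsState ρ'} =>
            𝔻.D (tensorMap (LinearMap.id : MatMap (Fin r) (Fin r)) N ρ'.1)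
              (tensorMap (LinearMap.id : MatMap (Fin r) (Fin r))
                (tensorMap (Rmap α' α) M) ρ'.1)) ρ)

end Aux7

/-- strong subadditivity of the generalized entropy for tripartite channels,
`𝐒[A|BC]_N ≤ 𝐒[A|B]_{tr_C ∘ N}`. -/
theorem stmt7 (𝔻 : StateDivergence) (a' b' c' a b c : ℕ)
    (N : MatMap (Fin a' × (Fin b' × Fin c')) (Fin a × (Fin b × Fin c)))
    (hN : IsChannel N) :
    condEnt 𝔻 N
      ≤ condEnt 𝔻 ((tensorMap (LinearMap.id : MatMap (Fin a) (Fin a))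
          (ptraceRightMap (Fin b) (Fin c))) ∘ₗ N) := by
  unfold condEnt
  rw [EReal.neg_le_neg_iff]
  refine le_iInf fun M => ?_
  refine iInf_le_of_le ⟨ptraceRightMap (Fin b) (Fin c) ∘ₗ M.1,
    isChannel_comp isChannel_ptrace M.2⟩ ?_
  exact chDiv_mono 𝔻 N hN M.1 M.2

end
end QIT
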